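/- For every block k, every w̄, v ∈ ℝ^d, and every β ∈ ℝ^{n_k}: P_k(v; w̄) − D_k(β; w̄) ≥ (λ/2)·‖v − A_[k]β‖². In particular, the local primal objective always dominates the local dual objective: P_k(v; w̄) ≥ D_k(β; w̄). -/
import Mathlib


open Finset MeasureTheory

noncomputable section

/-- Squared Euclidean norm of a finite real vector. -/
def sqnorm {m : ℕ} (v : Fin m → ℝ) : ℝ := ∑ j, v j ^ 2

/-- Euclidean norm of a finite real vector. -/
def euclNorm {m : ℕ} (v : Fin m → ℝ) : ℝ := Real.sqrt (sqnorm v)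

/-- Euclidean inner product. -/
def dotp {m : ℕ} (u v : Fin m → ℝ) : ℝ := ∑ j, u j * v j

/-- `g` is the (real-valued) Fenchel conjugate of `f`:
`g u` is the least upper bound of `z ↦ u*z - f z`. -/
def IsFenchelConj (f g : ℝ → ℝ) : Prop :=
  ∀ u : ℝ, IsLUB (Set.range fun z : ℝ => u * z - f z) (g u)

/-- `f` is smooth with constant `c`: differentiable with `c`-Lipschitz derivative. -/
def SmoothWith (c : ℝ) (f : ℝ → ℝ) : Prop :=
  Differentiable ℝ f ∧ ∀ z z' : ℝ, |deriv f z - deriv f z'| ≤ c * |z - z'|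

/-- `g : ℝ → ℝ` is `γ`-strongly convex. -/
def StrongConvexWith (γ : ℝ) (g : ℝ → ℝ) : Prop :=
  ConvexOn ℝ Set.univ fun u => g u - γ / 2 * u ^ 2

variable {n d K : ℕ}

/-- `A α` where the `i`-th column of `A` is `x i / (λ n)`. -/
def matA (lam : ℝ) (x : Fin n → Fin d → ℝ) (α : Fin n → ℝ) : Fin d → ℝ :=
  ∑ i, (α i / (lam * n)) • x i

/-- The block-`k` subvector `α_[k]` of `α`. -/
def blkOf (part : Fin n → Fin K) (k : Fin K) (α : Fin n → ℝ) :
    {i : Fin n // part i = k} → ℝ :=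
  fun i => α i.1

/-- `A_[k] β`: the block-`k` submatrix of `A` applied to a block-`k` vector. -/
def blkA (lam : ℝ) (x : Fin n → Fin d → ℝ) (part : Fin n → Fin K) (k : Fin K)
    (β : {i : Fin n // part i = k} → ℝ) : Fin d → ℝ :=
  ∑ i : {i : Fin n // part i = k}, (β i / (lam * n)) • x i.1

/-- `α⟨k←β⟩`: replace the block-`k` coordinates of `α` by `β`. -/
def updBlk (part : Fin n → Fin K) (k : Fin K) (α : Fin n → ℝ)
    (β : {i : Fin n // part i = k} → ℝ) : Fin n → ℝ :=
  fun i => if h : part i = k then β ⟨i, h⟩ else α i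

/-- `ι_k β`: zero-padding of a block-`k` vector to a full vector. -/
def padBlk (part : Fin n → Fin K) (k : Fin K)
    (β : {i : Fin n // part i = k} → ℝ) : Fin n → ℝ :=
  fun i => if h : part i = k then β ⟨i, h⟩ else 0

/-- The primal objective `P(w)`. -/
def primalObj (lam : ℝ) (x : Fin n → Fin d → ℝ) (l : Fin n → ℝ → ℝ)
    (w : Fin d → ℝ) : ℝ :=
  lam / 2 * sqnorm w + (1 / (n : ℝ)) * ∑ i, l i (dotp w (x i))

/-- The dual objective `D(α)`. -/
def dualObj (lam : ℝ) (x : Fin n → Fin d → ℝ) (lstar : Fin n → ℝ → ℝ)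
    (α : Fin n → ℝ) : ℝ :=
  -(lam / 2) * sqnorm (matA lam x α) - (1 / (n : ℝ)) * ∑ i, lstar i (-(α i))

/-- The local suboptimality `ε_{D,k}(α)` on block `k`. -/
def epsD (lam : ℝ) (x : Fin n → Fin d → ℝ) (lstar : Fin n → ℝ → ℝ)
    (part : Fin n → Fin K) (k : Fin K) (α : Fin n → ℝ) : ℝ :=
  ⨆ β : {i : Fin n // part i = k} → ℝ,
    dualObj lam x lstar (updBlk part k α β) - dualObj lam x lstar α

/-- `σ_min`: the supremum over nonzero `α` of
`λ²n²·(Σ_k ‖A_[k]α_[k]‖² − ‖Aα‖²)/‖α‖²`. -/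
def sigmaMin (lam : ℝ) (x : Fin n → Fin d → ℝ) (part : Fin n → Fin K) : ℝ :=
  sSup { r : ℝ | ∃ α : Fin n → ℝ, α ≠ 0 ∧
    r = lam ^ 2 * (n : ℝ) ^ 2 *
      ((∑ k, sqnorm (blkA lam x part k (blkOf part k α))) - sqnorm (matA lam x α)) /
        sqnorm α }

/-- The local dual objective `D_k(β; w̄)` on block `k`. -/
def locDual (lam : ℝ) (x : Fin n → Fin d → ℝ) (lstar : Fin n → ℝ → ℝ)
    (part : Fin n → Fin K) (k : Fin K) (wbar : Fin d → ℝ)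
    (β : {i : Fin n // part i = k} → ℝ) : ℝ :=
  -(lam / 2) * sqnorm (wbar + blkA lam x part k β)
    - (1 / (n : ℝ)) * ∑ i : {i : Fin n // part i = k}, lstar i.1 (-(β i))
    + lam / 2 * sqnorm wbar

/-- The local primal objective `P_k(v; w̄)` on block `k`. -/
def locPrimal (lam : ℝ) (x : Fin n → Fin d → ℝ) (l : Fin n → ℝ → ℝ)
    (part : Fin n → Fin K) (k : Fin K) (wbar v : Fin d → ℝ) : ℝ :=
  (1 / (n : ℝ)) * ∑ i : {i : Fin n // part i = k}, l i.1 (dotp (wbar + v) (x i.1))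
    + lam / 2 * sqnorm v

/-- Run `H` iterations of the coordinate-wise step `st`, where `ω` lists
the (randomly chosen) coordinates used in the successive iterations. -/
def iterRun {γ : Type*} {ι : Type*} (st : ι → γ → γ) :
    (H : ℕ) → (Fin H → ι) → γ → γ
  | 0, _, b => b
  | H + 1, ω, b => iterRun st H (fun h => ω h.succ) (st (ω 0) b)

lemma sqnorm_add_expand {m : ℕ} (a b : Fin m → ℝ) :
    sqnorm (a + b) = sqnorm a + 2 * dotp a b + sqnorm b := by
  simp only [sqnorm, dotp, Pi.add_apply, Finset.mul_sum]
  rw [← Finset.sum_add_distrib, ← Finset.sum_add_distrib]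
  exact Finset.sum_congr rfl fun j _ => by ring

lemma sqnorm_sub_expand {m : ℕ} (a b : Fin m → ℝ) :
    sqnorm (a - b) = sqnorm a - 2 * dotp a b + sqnorm b := by
  simp only [sqnorm, dotp, Pi.sub_apply, Finset.mul_sum]
  rw [← Finset.sum_sub_distrib, ← Finset.sum_add_distrib]
  exact Finset.sum_congr rfl fun j _ => by ring

lemma dotp_add_left {m : ℕ} (a b c : Fin m → ℝ) :
    dotp (a + b) c = dotp a c + dotp b c := by
  simp only [dotp, Pi.add_apply, ← Finset.sum_add_distrib]
  exact Finset.sum_congr rfl fun j _ => by ring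

lemma dotp_sum_smul {m : ℕ} {ι : Type*} [Fintype ι] (u : Fin m → ℝ)
    (c : ι → ℝ) (w : ι → Fin m → ℝ) :
    dotp u (∑ i, c i • w i) = ∑ i, c i * dotp u (w i) := by
  simp only [dotp, Finset.sum_apply, Pi.smul_apply, smul_eq_mul, Finset.mul_sum]
  rw [Finset.sum_comm]
  exact Finset.sum_congr rfl fun i _ => Finset.sum_congr rfl fun j _ => by ring

lemma sqnorm_nonneg {m : ℕ} (a : Fin m → ℝ) : 0 ≤ sqnorm a :=
  Finset.sum_nonneg fun j _ => sq_nonneg _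

/-- local weak duality with quadratic gap. -/
theorem local_weak_duality
    (n d K : ℕ) (hn : 0 < n) (hd : 0 < d) (hK : 0 < K)
    (lam : ℝ) (hlam : 0 < lam)
    (x : Fin n → Fin d → ℝ)
    (l lstar : Fin n → ℝ → ℝ)
    (hconj : ∀ i, IsFenchelConj (l i) (lstar i))
    (part : Fin n → Fin K) (k : Fin K)
    (wbar v : Fin d → ℝ) (β : {i : Fin n // part i = k} → ℝ) :
    lam / 2 * sqnorm (v - blkA lam x part k β)
      ≤ locPrimal lam x l part k wbar v - locDual lam x lstar part k wbar β ∧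
    locDual lam x lstar part k wbar β ≤ locPrimal lam x l part k wbar v := by
  have hlam' : lam ≠ 0 := ne_of_gt hlam
  have hn' : (n : ℝ) ≠ 0 := Nat.cast_ne_zero.mpr hn.ne'
  set S := blkA lam x part k β with hS
  set z : {i : Fin n // part i = k} → ℝ := fun i => dotp (wbar + v) (x i.1) with hz
  have hdS : lam * (dotp wbar S + dotp v S) = (1 / (n : ℝ)) * ∑ i, β i * z i := by
    rw [← dotp_add_left, hS, blkA, dotp_sum_smul, Finset.mul_sum, Finset.mul_sum]
    refine Finset.sum_congr rfl fun i _ => ?_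
    field_simp
    ring
  have key : locPrimal lam x l part k wbar v - locDual lam x lstar part k wbar β
      = lam / 2 * sqnorm (v - S)
        + (1 / (n : ℝ)) * ∑ i, (l i.1 (z i) + lstar i.1 (-(β i)) + β i * z i) := by
    unfold locPrimal locDual
    rw [sqnorm_add_expand wbar S, sqnorm_sub_expand v S]
    have hsum : ∑ i : {i : Fin n // part i = k},
        (l i.1 (z i) + lstar i.1 (-(β i)) + β i * z i)
        = (∑ i, l i.1 (z i)) + (∑ i, lstar i.1 (-(β i))) + ∑ i, β i * z i := by
      rw [← Finset.sum_add_distrib, ← Finset.sum_add_distrib]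
    rw [hsum]
    linear_combination hdS
  have hnonneg : 0 ≤ (1 / (n : ℝ)) * ∑ i, (l i.1 (z i) + lstar i.1 (-(β i)) + β i * z i) := by
    apply mul_nonneg (by positivity)
    refine Finset.sum_nonneg fun i _ => ?_
    have h := (hconj i.1 (-(β i))).1 ⟨z i, rfl⟩
    simp only at h
    linarith
  have hq : 0 ≤ lam / 2 * sqnorm (v - S) :=
    mul_nonneg (by positivity) (sqnorm_nonneg _)
  constructor
  · linarith [key, hnonneg]
  · linarith [key, hnonneg, hq]
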